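/- arXiv:2402.01232 — 4 statements merged into one kernel-verified Lean document; each statement's English description precedes it below -/
import Mathlib

section
/- Let a < b, let Φ : ℝ → ℝ^N be continuously differentiable, and let 𝓗 : ℝ → ℝ be continuous with 𝓗(ζ) > 0 on [a,b]. Define E = ∫_a^b Φ(ζ)Φ(ζ)ᵀ dζ, F = -Φ(a)Φ(a)ᵀ - ∫_a^b Φ'(ζ)Φ(ζ)ᵀ dζ, Q = ∫_a^b Φ(ζ)𝓗(ζ)Φ(ζ)ᵀ dζ, B = Φ(b), C = Φ(a). Suppose x_d, e_d : ℝ → ℝ^N and u : ℝ → ℝ are differentiable functions satisfying, for all t: E ẋ_d(t) = F e_d(t) + B u(t), E e_d(t) = Q x_d(t), and u(t) = Φ(b)ᵀ e_d(t); define the output y(t) = Cᵀ e_d(t) = Φ(a)ᵀ e_d(t). Then the discretized Hamiltonian H_d(t) = (1/2) x_d(t)ᵀ Q x_d(t) satisfies Ḣ_d(t) = (1/2)(u(t)² - y(t)²); that is, the finite element discretization preserves the scattering energy preserving structure of the transport equation. -/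
open Matrix intervalIntegral in
private lemma fem_aux_quad_deriv (N : ℕ) (Q : Matrix (Fin N) (Fin N) ℝ)
    (x : ℝ → Fin N → ℝ) (hx : Differentiable ℝ x) (t : ℝ) :
    HasDerivAt (fun s => x s ⬝ᵥ (Q *ᵥ x s))
      (deriv x t ⬝ᵥ (Q *ᵥ x t) + x t ⬝ᵥ (Q *ᵥ deriv x t)) t := by
  have hc : ∀ i, HasDerivAt (fun s => x s i) (deriv x t i) t :=
    hasDerivAt_pi.1 (hx t).hasDerivAt
  have key : HasDerivAt (fun s => x s ⬝ᵥ (Q *ᵥ x s))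
      (∑ i, (deriv x t i * (Q *ᵥ x t) i + x t i * (Q *ᵥ deriv x t) i)) t := by
    simp only [dotProduct, mulVec]
    apply HasDerivAt.fun_sum
    intro i _
    exact (hc i).mul (HasDerivAt.fun_sum fun j _ => (hc j).const_mul (Q i j))
  simpa [dotProduct, Finset.sum_add_distrib] using key

open Matrix intervalIntegral in
private lemma fem_aux_sym_dot (N : ℕ) (M : Matrix (Fin N) (Fin N) ℝ)
    (hM : Mᵀ = M) (x y : Fin N → ℝ) :
    x ⬝ᵥ (M *ᵥ y) = y ⬝ᵥ (M *ᵥ x) := by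
  rw [Matrix.dotProduct_mulVec, ← hM, Matrix.vecMul_transpose, hM, dotProduct_comm]

open Matrix intervalIntegral in
private lemma fem_aux_bilinear_boundary (N : ℕ) (a b : ℝ)
    (Φ : ℝ → Fin N → ℝ) (hΦ : ContDiff ℝ 1 Φ) (e : Fin N → ℝ) :
    e ⬝ᵥ ((Matrix.of fun i j => ∫ ζ in a..b, deriv Φ ζ i * Φ ζ j) *ᵥ e)
      = ((Φ b ⬝ᵥ e) ^ 2 - (Φ a ⬝ᵥ e) ^ 2) / 2 := by
  have hΦc : Continuous Φ := hΦ.continuous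
  have hΦ'c : Continuous (deriv Φ) := hΦ.continuous_deriv le_rfl
  have hci : ∀ i, Continuous fun ζ => Φ ζ i := fun i => (continuous_apply i).comp hΦc
  have hci' : ∀ i, Continuous fun ζ => deriv Φ ζ i := fun i => (continuous_apply i).comp hΦ'c
  have hc1 : Continuous fun ζ => deriv Φ ζ ⬝ᵥ e := by
    simp only [dotProduct]
    exact continuous_finset_sum _ fun i _ => (hci' i).mul continuous_const
  have hc2 : Continuous fun ζ => Φ ζ ⬝ᵥ e := by
    simp only [dotProduct]
    exact continuous_finset_sum _ fun i _ => (hci i).mul continuous_const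
  have hgd : ∀ ζ : ℝ, HasDerivAt (fun ζ => Φ ζ ⬝ᵥ e) (deriv Φ ζ ⬝ᵥ e) ζ := by
    intro ζ
    simp only [dotProduct]
    exact HasDerivAt.fun_sum fun i _ =>
      ((hasDerivAt_pi.1 (hΦ.differentiable one_ne_zero ζ).hasDerivAt i).mul_const (e i))
  have h1 : e ⬝ᵥ ((Matrix.of fun i j => ∫ ζ in a..b, deriv Φ ζ i * Φ ζ j) *ᵥ e)
      = ∫ ζ in a..b, (deriv Φ ζ ⬝ᵥ e) * (Φ ζ ⬝ᵥ e) := by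
    conv_lhs => simp only [dotProduct, mulVec, Matrix.of_apply, Finset.mul_sum]
    calc ∑ i, ∑ j, e i * ((∫ ζ in a..b, deriv Φ ζ i * Φ ζ j) * e j)
        = ∑ i, ∑ j, ∫ ζ in a..b, e i * (deriv Φ ζ i * Φ ζ j) * e j := by
          refine Finset.sum_congr rfl fun i _ => Finset.sum_congr rfl fun j _ => ?_
          rw [integral_mul_const, integral_const_mul, mul_assoc]
      _ = ∑ i, ∫ ζ in a..b, ∑ j, e i * (deriv Φ ζ i * Φ ζ j) * e j := by
          refine Finset.sum_congr rfl fun i _ => ?_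
          rw [integral_finset_sum]
          intro j _
          exact ((continuous_const.mul ((hci' i).mul (hci j))).mul
            continuous_const).intervalIntegrable _ _
      _ = ∫ ζ in a..b, ∑ i, ∑ j, e i * (deriv Φ ζ i * Φ ζ j) * e j := by
          rw [integral_finset_sum]
          intro i _
          apply Continuous.intervalIntegrable
          exact continuous_finset_sum _ fun j _ =>
            (continuous_const.mul ((hci' i).mul (hci j))).mul continuous_const
      _ = ∫ ζ in a..b, (deriv Φ ζ ⬝ᵥ e) * (Φ ζ ⬝ᵥ e) := by
          refine intervalIntegral.integral_congr fun ζ _ => ?_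
          simp only [dotProduct, Finset.sum_mul, Finset.mul_sum]
          rw [Finset.sum_comm]
          exact Finset.sum_congr rfl fun i _ => Finset.sum_congr rfl fun j _ => by ring
  rw [h1, intervalIntegral.integral_eq_sub_of_hasDerivAt
    (f := fun ζ => (Φ ζ ⬝ᵥ e) ^ 2 / 2)
    (f' := fun ζ => (deriv Φ ζ ⬝ᵥ e) * (Φ ζ ⬝ᵥ e))
    (fun ζ _ => by
      have := ((hgd ζ).fun_pow 2).div_const 2
      exact this.congr_deriv (by ring))
    ((hc1.mul hc2).intervalIntegrable _ _)]
  ring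

open Matrix in
/-- The finite element discretization of the one-dimensional transport equation
(velocity direction `c = -1`) preserves the scattering energy preserving structure:
the discretized Hamiltonian `H_d = (1/2) x_dᵀ Q x_d` satisfies
`Ḣ_d = (1/2)(u² - y²)`. -/
theorem fem_transport1d_discrete_scattering_energy_balance
    (N : ℕ) (a b : ℝ) (hab : a < b)
    (Φ : ℝ → Fin N → ℝ) (hΦ : ContDiff ℝ 1 Φ)
    (𝓗 : ℝ → ℝ) (h𝓗cont : Continuous 𝓗)
    (h𝓗pos : ∀ ζ ∈ Set.Icc a b, 0 < 𝓗 ζ)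
    (E F Q : Matrix (Fin N) (Fin N) ℝ) (B C : Fin N → ℝ)
    (hE : E = Matrix.of fun i j => ∫ ζ in a..b, Φ ζ i * Φ ζ j)
    (hF : F = -vecMulVec (Φ a) (Φ a)
        - Matrix.of fun i j => ∫ ζ in a..b, deriv Φ ζ i * Φ ζ j)
    (hQ : Q = Matrix.of fun i j => ∫ ζ in a..b, Φ ζ i * 𝓗 ζ * Φ ζ j)
    (hB : B = Φ b) (hC : C = Φ a)
    (x_d e_d : ℝ → Fin N → ℝ) (u y : ℝ → ℝ)
    (hx_d : Differentiable ℝ x_d) (he_d : Differentiable ℝ e_d)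
    (hu : Differentiable ℝ u)
    (hdyn : ∀ t : ℝ, E *ᵥ deriv x_d t = F *ᵥ e_d t + u t • B)
    (hconstit : ∀ t : ℝ, E *ᵥ e_d t = Q *ᵥ x_d t)
    (huin : ∀ t : ℝ, u t = Φ b ⬝ᵥ e_d t)
    (hy : ∀ t : ℝ, y t = C ⬝ᵥ e_d t) :
    ∀ t : ℝ, HasDerivAt (fun s => (1 / 2) * (x_d s ⬝ᵥ (Q *ᵥ x_d s)))
      ((1 / 2) * ((u t) ^ 2 - (y t) ^ 2)) t := by
  intro t
  -- symmetry of Q and E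
  have hQs : Qᵀ = Q := by
    rw [hQ]; ext i j
    simp only [Matrix.transpose_apply, Matrix.of_apply]
    congr 1; ext ζ; ring
  have hEs : Eᵀ = E := by
    rw [hE]; ext i j
    simp only [Matrix.transpose_apply, Matrix.of_apply]
    congr 1; ext ζ; ring
  have hq := fem_aux_quad_deriv N Q x_d hx_d t
  have hD : deriv x_d t ⬝ᵥ (Q *ᵥ x_d t) + x_d t ⬝ᵥ (Q *ᵥ deriv x_d t)
      = (u t) ^ 2 - (y t) ^ 2 := by
    have h2 : x_d t ⬝ᵥ (Q *ᵥ deriv x_d t) = deriv x_d t ⬝ᵥ (Q *ᵥ x_d t) :=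
      fem_aux_sym_dot N Q hQs _ _
    have h3 : deriv x_d t ⬝ᵥ (Q *ᵥ x_d t) = e_d t ⬝ᵥ (E *ᵥ deriv x_d t) := by
      rw [← hconstit t, fem_aux_sym_dot N E hEs]
    have hub : e_d t ⬝ᵥ B = u t := by
      rw [hB, dotProduct_comm, ← huin t]
    have hya : Φ a ⬝ᵥ e_d t = y t := by rw [hy t, hC]
    have hFe : e_d t ⬝ᵥ (F *ᵥ e_d t)
        = -(y t) ^ 2 - ((u t) ^ 2 - (y t) ^ 2) / 2 := by
      rw [hF, Matrix.sub_mulVec, Matrix.neg_mulVec, dotProduct_sub,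
        dotProduct_neg, fem_aux_bilinear_boundary N a b Φ hΦ (e_d t),
        huin t, hya]
      have hvv : e_d t ⬝ᵥ (vecMulVec (Φ a) (Φ a) *ᵥ e_d t) = (y t) ^ 2 := by
        have : vecMulVec (Φ a) (Φ a) *ᵥ e_d t = (Φ a ⬝ᵥ e_d t) • Φ a := by
          ext i
          simp only [Matrix.mulVec, Matrix.vecMulVec_apply, dotProduct,
            Pi.smul_apply, smul_eq_mul, Finset.mul_sum]
          rw [Finset.sum_mul]
          exact Finset.sum_congr rfl fun j _ => by ring
        rw [this, dotProduct_smul, smul_eq_mul,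
          dotProduct_comm (e_d t) (Φ a), hya]
        ring
      rw [hvv]
    have h4 : e_d t ⬝ᵥ (E *ᵥ deriv x_d t)
        = e_d t ⬝ᵥ (F *ᵥ e_d t) + u t * (e_d t ⬝ᵥ B) := by
      rw [hdyn t, dotProduct_add, dotProduct_smul, smul_eq_mul]
    rw [h2, h3, h4, hFe, hub]
    ring
  have := hq.const_mul (1 / 2 : ℝ)
  rwa [hD] at this
end

section
/- Let Ω = [0,L₁] × [0,L₂] be a rectangle, let c = (c₁,c₂) : ℝ² → ℝ² and Φ : ℝ² → ℝ^N (with components φ₁,…,φ_N) be continuously differentiable. Define the N × N matrices F₁ with entries (F₁)_{ij} = -∬_Ω φᵢ(ζ) div(c φⱼ)(ζ) dζ, Q_c = ∬_Ω Φ(ζ) div(c)(ζ) Φ(ζ)ᵀ dζ, and S = ∫₀^{L₂} Φ(L₁,ζ₂)Φ(L₁,ζ₂)ᵀ c₁(L₁,ζ₂) dζ₂ - ∫₀^{L₂} Φ(0,ζ₂)Φ(0,ζ₂)ᵀ c₁(0,ζ₂) dζ₂ + ∫₀^{L₁} Φ(ζ₁,L₂)Φ(ζ₁,L₂)ᵀ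 c₂(ζ₁,L₂) dζ₁ - ∫₀^{L₁} Φ(ζ₁,0)Φ(ζ₁,0)ᵀ c₂(ζ₁,0) dζ₁ (the boundary matrix ∮_Γ ΦΦᵀ cᵀn ds). Then F₁ + F₁ᵀ = -Q_c - S. -/
open MeasureTheory Function

private lemma hasDerivAt_slice1 {f : ℝ × ℝ → ℝ} (hf : Differentiable ℝ f) (x y : ℝ) :
    HasDerivAt (fun s => f (s, y)) (fderiv ℝ f (x, y) (1, 0)) x := by
  have h1 : HasDerivAt (fun s : ℝ => (s, y)) ((1 : ℝ), (0 : ℝ)) x :=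
    (hasDerivAt_id x).prodMk (hasDerivAt_const x y)
  exact (hf (x, y)).hasFDerivAt.comp_hasDerivAt x h1

private lemma hasDerivAt_slice2 {f : ℝ × ℝ → ℝ} (hf : Differentiable ℝ f) (x y : ℝ) :
    HasDerivAt (fun s => f (x, s)) (fderiv ℝ f (x, y) (0, 1)) y := by
  have h1 : HasDerivAt (fun s : ℝ => (x, s)) ((0 : ℝ), (1 : ℝ)) y :=
    (hasDerivAt_const y x).prodMk (hasDerivAt_id y)
  exact (hf (x, y)).hasFDerivAt.comp_hasDerivAt y h1

private lemma continuous_pd {f : ℝ × ℝ → ℝ} (hf : ContDiff ℝ 1 f) (v : ℝ × ℝ) :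
    Continuous fun ζ => fderiv ℝ f ζ v :=
  (hf.continuous_fderiv one_ne_zero).clm_apply continuous_const

private lemma cont_inner {H : ℝ × ℝ → ℝ} (hH : Continuous H) (b : ℝ) :
    Continuous fun x => ∫ y in (0:ℝ)..b, H (x, y) :=
  intervalIntegral.continuous_parametric_intervalIntegral_of_continuous'
    (f := fun x y => H (x, y)) (by exact hH) 0 b

private lemma swap_int {f : ℝ × ℝ → ℝ} (hf : Continuous f) {a b : ℝ}
    (ha : 0 ≤ a) (hb : 0 ≤ b) :
    ∫ x in (0:ℝ)..a, ∫ y in (0:ℝ)..b, f (x, y)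
      = ∫ y in (0:ℝ)..b, ∫ x in (0:ℝ)..a, f (x, y) := by
  have hint : Integrable (uncurry fun x y => f (x, y))
      ((volume.restrict (Set.Ioc 0 a)).prod (volume.restrict (Set.Ioc 0 b))) := by
    rw [Measure.prod_restrict]
    have : IntegrableOn f (Set.Icc 0 a ×ˢ Set.Icc 0 b) :=
      hf.continuousOn.integrableOn_compact (isCompact_Icc.prod isCompact_Icc)
    exact (this.mono_set (Set.prod_mono Set.Ioc_subset_Icc_self Set.Ioc_subset_Icc_self))
  rw [intervalIntegral.integral_of_le ha, intervalIntegral.integral_of_le hb]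
  simp_rw [intervalIntegral.integral_of_le hb, intervalIntegral.integral_of_le ha]
  exact integral_integral_swap hint

private lemma ftc_slice1 {A : ℝ × ℝ → ℝ} {A' : ℝ × ℝ → ℝ} (hA' : Continuous A')
    (h : ∀ x y : ℝ, HasDerivAt (fun s => A (s, y)) (A' (x, y)) x) (a y : ℝ) :
    ∫ x in (0:ℝ)..a, A' (x, y) = A (a, y) - A (0, y) := by
  apply intervalIntegral.integral_eq_sub_of_hasDerivAt (fun x _ => h x y)
  exact (hA'.comp (continuous_id.prodMk continuous_const)).intervalIntegrable _ _

private lemma ftc_slice2 {B : ℝ × ℝ → ℝ} {B' : ℝ × ℝ → ℝ} (hB' : Continuous B')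
    (h : ∀ x y : ℝ, HasDerivAt (fun s => B (x, s)) (B' (x, y)) y) (b x : ℝ) :
    ∫ y in (0:ℝ)..b, B' (x, y) = B (x, b) - B (x, 0) := by
  apply intervalIntegral.integral_eq_sub_of_hasDerivAt (fun y _ => h x y)
  exact (hB'.comp (continuous_const.prodMk continuous_id)).intervalIntegrable _ _

private lemma split_double {P Q : ℝ × ℝ → ℝ} (hP : Continuous P) (hQ : Continuous Q)
    (a b : ℝ) :
    (∫ x in (0:ℝ)..a, ∫ y in (0:ℝ)..b, (P (x, y) + Q (x, y)))
      = (∫ x in (0:ℝ)..a, ∫ y in (0:ℝ)..b, P (x, y))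
        + ∫ x in (0:ℝ)..a, ∫ y in (0:ℝ)..b, Q (x, y) := by
  have h1 : ∀ x : ℝ, (∫ y in (0:ℝ)..b, (P (x, y) + Q (x, y)))
      = (∫ y in (0:ℝ)..b, P (x, y)) + ∫ y in (0:ℝ)..b, Q (x, y) := fun x =>
    intervalIntegral.integral_add
      ((hP.comp (continuous_const.prodMk continuous_id)).intervalIntegrable _ _)
      ((hQ.comp (continuous_const.prodMk continuous_id)).intervalIntegrable _ _)
  simp only [h1]
  exact intervalIntegral.integral_add
    ((cont_inner hP b).intervalIntegrable _ _) ((cont_inner hQ b).intervalIntegrable _ _)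

private lemma congr_double (P Q : ℝ × ℝ → ℝ) (h : P = Q) (a b : ℝ) :
    (∫ x in (0:ℝ)..a, ∫ y in (0:ℝ)..b, P (x, y))
      = ∫ x in (0:ℝ)..a, ∫ y in (0:ℝ)..b, Q (x, y) := by rw [h]

private lemma key (L₁ L₂ : ℝ) (hL₁ : 0 ≤ L₁) (hL₂ : 0 ≤ L₂)
    (c₁ c₂ f g : ℝ × ℝ → ℝ)
    (hc₁ : ContDiff ℝ 1 c₁) (hc₂ : ContDiff ℝ 1 c₂)
    (hf : ContDiff ℝ 1 f) (hg : ContDiff ℝ 1 g) :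
    (-∫ x in (0:ℝ)..L₁, ∫ y in (0:ℝ)..L₂,
        f (x, y) * (deriv (fun s => c₁ (s, y) * g (s, y)) x
          + deriv (fun s => c₂ (x, s) * g (x, s)) y))
    + (-∫ x in (0:ℝ)..L₁, ∫ y in (0:ℝ)..L₂,
        g (x, y) * (deriv (fun s => c₁ (s, y) * f (s, y)) x
          + deriv (fun s => c₂ (x, s) * f (x, s)) y))
    = -(∫ x in (0:ℝ)..L₁, ∫ y in (0:ℝ)..L₂,
        f (x, y) * (deriv (fun s => c₁ (s, y)) x + deriv (fun s => c₂ (x, s)) y) * g (x, y))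
      - ((∫ y in (0:ℝ)..L₂, f (L₁, y) * g (L₁, y) * c₁ (L₁, y))
        - (∫ y in (0:ℝ)..L₂, f (0, y) * g (0, y) * c₁ (0, y))
        + (∫ x in (0:ℝ)..L₁, f (x, L₂) * g (x, L₂) * c₂ (x, L₂))
        - (∫ x in (0:ℝ)..L₁, f (x, 0) * g (x, 0) * c₂ (x, 0))) := by
  have Dc₁ := hc₁.differentiable one_ne_zero
  have Dc₂ := hc₂.differentiable one_ne_zero
  have Df := hf.differentiable one_ne_zero
  have Dg := hg.differentiable one_ne_zero
  have hd1 : ∀ (u : ℝ × ℝ → ℝ), Differentiable ℝ u → ∀ x y : ℝ,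
      deriv (fun s => c₁ (s, y) * u (s, y)) x
        = fderiv ℝ c₁ (x, y) (1, 0) * u (x, y) + c₁ (x, y) * fderiv ℝ u (x, y) (1, 0) :=
    fun u hu x y => ((hasDerivAt_slice1 Dc₁ x y).mul (hasDerivAt_slice1 hu x y)).deriv
  have hd2 : ∀ (u : ℝ × ℝ → ℝ), Differentiable ℝ u → ∀ x y : ℝ,
      deriv (fun s => c₂ (x, s) * u (x, s)) y
        = fderiv ℝ c₂ (x, y) (0, 1) * u (x, y) + c₂ (x, y) * fderiv ℝ u (x, y) (0, 1) :=
    fun u hu x y => ((hasDerivAt_slice2 Dc₂ x y).mul (hasDerivAt_slice2 hu x y)).deriv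
  have hdc₁ : ∀ x y : ℝ, deriv (fun s => c₁ (s, y)) x = fderiv ℝ c₁ (x, y) (1, 0) :=
    fun x y => (hasDerivAt_slice1 Dc₁ x y).deriv
  have hdc₂ : ∀ x y : ℝ, deriv (fun s => c₂ (x, s)) y = fderiv ℝ c₂ (x, y) (0, 1) :=
    fun x y => (hasDerivAt_slice2 Dc₂ x y).deriv
  simp only [hd1 g Dg, hd2 g Dg, hd1 f Df, hd2 f Df, hdc₁, hdc₂]
  -- continuity facts
  have kf := hf.continuous
  have kg := hg.continuous
  have kc₁ := hc₁.continuous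
  have kc₂ := hc₂.continuous
  have k1f := continuous_pd hf ((1 : ℝ), (0 : ℝ))
  have k2f := continuous_pd hf ((0 : ℝ), (1 : ℝ))
  have k1g := continuous_pd hg ((1 : ℝ), (0 : ℝ))
  have k2g := continuous_pd hg ((0 : ℝ), (1 : ℝ))
  have k1c₁ := continuous_pd hc₁ ((1 : ℝ), (0 : ℝ))
  have k2c₂ := continuous_pd hc₂ ((0 : ℝ), (1 : ℝ))
  have hE₁c : Continuous (fun ζ : ℝ × ℝ => f ζ *
      (fderiv ℝ c₁ ζ (1, 0) * g ζ + c₁ ζ * fderiv ℝ g ζ (1, 0)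
        + (fderiv ℝ c₂ ζ (0, 1) * g ζ + c₂ ζ * fderiv ℝ g ζ (0, 1)))) :=
    kf.mul (((k1c₁.mul kg).add (kc₁.mul k1g)).add ((k2c₂.mul kg).add (kc₂.mul k2g)))
  have hE₂c : Continuous (fun ζ : ℝ × ℝ => g ζ *
      (fderiv ℝ c₁ ζ (1, 0) * f ζ + c₁ ζ * fderiv ℝ f ζ (1, 0)
        + (fderiv ℝ c₂ ζ (0, 1) * f ζ + c₂ ζ * fderiv ℝ f ζ (0, 1)))) :=
    kg.mul (((k1c₁.mul kf).add (kc₁.mul k1f)).add ((k2c₂.mul kf).add (kc₂.mul k2f)))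
  have hE₃c : Continuous (fun ζ : ℝ × ℝ =>
      f ζ * (fderiv ℝ c₁ ζ (1, 0) + fderiv ℝ c₂ ζ (0, 1)) * g ζ) :=
    (kf.mul (k1c₁.add k2c₂)).mul kg
  have hDAc : Continuous (fun ζ : ℝ × ℝ =>
      (fderiv ℝ f ζ (1, 0) * g ζ + f ζ * fderiv ℝ g ζ (1, 0)) * c₁ ζ
        + f ζ * g ζ * fderiv ℝ c₁ ζ (1, 0)) :=
    (((k1f.mul kg).add (kf.mul k1g)).mul kc₁).add ((kf.mul kg).mul k1c₁)
  have hDBc : Continuous (fun ζ : ℝ × ℝ =>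
      (fderiv ℝ f ζ (0, 1) * g ζ + f ζ * fderiv ℝ g ζ (0, 1)) * c₂ ζ
        + f ζ * g ζ * fderiv ℝ c₂ ζ (0, 1)) :=
    (((k2f.mul kg).add (kf.mul k2g)).mul kc₂).add ((kf.mul kg).mul k2c₂)
  -- FTC for the A-part (needs Fubini swap)
  have hA : (∫ x in (0:ℝ)..L₁, ∫ y in (0:ℝ)..L₂,
      ((fderiv ℝ f (x, y) (1, 0) * g (x, y) + f (x, y) * fderiv ℝ g (x, y) (1, 0)) * c₁ (x, y)
        + f (x, y) * g (x, y) * fderiv ℝ c₁ (x, y) (1, 0)))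
      = (∫ y in (0:ℝ)..L₂, f (L₁, y) * g (L₁, y) * c₁ (L₁, y))
        - ∫ y in (0:ℝ)..L₂, f (0, y) * g (0, y) * c₁ (0, y) := by
    refine (swap_int hDAc hL₁ hL₂).trans ?_
    have hFTC : ∀ y : ℝ, (∫ x in (0:ℝ)..L₁,
        ((fderiv ℝ f (x, y) (1, 0) * g (x, y) + f (x, y) * fderiv ℝ g (x, y) (1, 0)) * c₁ (x, y)
          + f (x, y) * g (x, y) * fderiv ℝ c₁ (x, y) (1, 0)))
        = f (L₁, y) * g (L₁, y) * c₁ (L₁, y) - f (0, y) * g (0, y) * c₁ (0, y) := fun y =>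
      ftc_slice1 (A := fun ζ => f ζ * g ζ * c₁ ζ) hDAc
        (fun x y => ((hasDerivAt_slice1 Df x y).mul (hasDerivAt_slice1 Dg x y)).mul
          (hasDerivAt_slice1 Dc₁ x y)) L₁ y
    simp only [hFTC]
    exact intervalIntegral.integral_sub
      ((((kf.comp (continuous_const.prodMk continuous_id)).mul
        (kg.comp (continuous_const.prodMk continuous_id))).mul
        (kc₁.comp (continuous_const.prodMk continuous_id))).intervalIntegrable _ _)
      ((((kf.comp (continuous_const.prodMk continuous_id)).mul
        (kg.comp (continuous_const.prodMk continuous_id))).mul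
        (kc₁.comp (continuous_const.prodMk continuous_id))).intervalIntegrable _ _)
  -- FTC for the B-part
  have hB : (∫ x in (0:ℝ)..L₁, ∫ y in (0:ℝ)..L₂,
      ((fderiv ℝ f (x, y) (0, 1) * g (x, y) + f (x, y) * fderiv ℝ g (x, y) (0, 1)) * c₂ (x, y)
        + f (x, y) * g (x, y) * fderiv ℝ c₂ (x, y) (0, 1)))
      = (∫ x in (0:ℝ)..L₁, f (x, L₂) * g (x, L₂) * c₂ (x, L₂))
        - ∫ x in (0:ℝ)..L₁, f (x, 0) * g (x, 0) * c₂ (x, 0) := by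
    have hFTC : ∀ x : ℝ, (∫ y in (0:ℝ)..L₂,
        ((fderiv ℝ f (x, y) (0, 1) * g (x, y) + f (x, y) * fderiv ℝ g (x, y) (0, 1)) * c₂ (x, y)
          + f (x, y) * g (x, y) * fderiv ℝ c₂ (x, y) (0, 1)))
        = f (x, L₂) * g (x, L₂) * c₂ (x, L₂) - f (x, 0) * g (x, 0) * c₂ (x, 0) := fun x =>
      ftc_slice2 (B := fun ζ => f ζ * g ζ * c₂ ζ) hDBc
        (fun x y => ((hasDerivAt_slice2 Df x y).mul (hasDerivAt_slice2 Dg x y)).mul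
          (hasDerivAt_slice2 Dc₂ x y)) L₂ x
    simp only [hFTC]
    exact intervalIntegral.integral_sub
      ((((kf.comp (continuous_id.prodMk continuous_const)).mul
        (kg.comp (continuous_id.prodMk continuous_const))).mul
        (kc₂.comp (continuous_id.prodMk continuous_const))).intervalIntegrable _ _)
      ((((kf.comp (continuous_id.prodMk continuous_const)).mul
        (kg.comp (continuous_id.prodMk continuous_const))).mul
        (kc₂.comp (continuous_id.prodMk continuous_const))).intervalIntegrable _ _)
  -- combine
  have hbig : (∫ x in (0:ℝ)..L₁, ∫ y in (0:ℝ)..L₂,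
        f (x, y) * (fderiv ℝ c₁ (x, y) (1, 0) * g (x, y) + c₁ (x, y) * fderiv ℝ g (x, y) (1, 0)
          + (fderiv ℝ c₂ (x, y) (0, 1) * g (x, y) + c₂ (x, y) * fderiv ℝ g (x, y) (0, 1))))
      + (∫ x in (0:ℝ)..L₁, ∫ y in (0:ℝ)..L₂,
        g (x, y) * (fderiv ℝ c₁ (x, y) (1, 0) * f (x, y) + c₁ (x, y) * fderiv ℝ f (x, y) (1, 0)
          + (fderiv ℝ c₂ (x, y) (0, 1) * f (x, y) + c₂ (x, y) * fderiv ℝ f (x, y) (0, 1))))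
      = (∫ x in (0:ℝ)..L₁, ∫ y in (0:ℝ)..L₂,
          ((fderiv ℝ f (x, y) (1, 0) * g (x, y) + f (x, y) * fderiv ℝ g (x, y) (1, 0)) * c₁ (x, y)
            + f (x, y) * g (x, y) * fderiv ℝ c₁ (x, y) (1, 0)))
        + ((∫ x in (0:ℝ)..L₁, ∫ y in (0:ℝ)..L₂,
          ((fderiv ℝ f (x, y) (0, 1) * g (x, y) + f (x, y) * fderiv ℝ g (x, y) (0, 1)) * c₂ (x, y)
            + f (x, y) * g (x, y) * fderiv ℝ c₂ (x, y) (0, 1)))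
          + ∫ x in (0:ℝ)..L₁, ∫ y in (0:ℝ)..L₂,
            f (x, y) * (fderiv ℝ c₁ (x, y) (1, 0) + fderiv ℝ c₂ (x, y) (0, 1)) * g (x, y)) := by
    calc
      _ = ∫ x in (0:ℝ)..L₁, ∫ y in (0:ℝ)..L₂,
          (f (x, y) * (fderiv ℝ c₁ (x, y) (1, 0) * g (x, y) + c₁ (x, y) * fderiv ℝ g (x, y) (1, 0)
            + (fderiv ℝ c₂ (x, y) (0, 1) * g (x, y) + c₂ (x, y) * fderiv ℝ g (x, y) (0, 1)))
          + g (x, y) * (fderiv ℝ c₁ (x, y) (1, 0) * f (x, y) + c₁ (x, y) * fderiv ℝ f (x, y) (1, 0)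
            + (fderiv ℝ c₂ (x, y) (0, 1) * f (x, y) + c₂ (x, y) * fderiv ℝ f (x, y) (0, 1)))) :=
        (split_double hE₁c hE₂c L₁ L₂).symm
      _ = ∫ x in (0:ℝ)..L₁, ∫ y in (0:ℝ)..L₂,
          (((fderiv ℝ f (x, y) (1, 0) * g (x, y) + f (x, y) * fderiv ℝ g (x, y) (1, 0)) * c₁ (x, y)
            + f (x, y) * g (x, y) * fderiv ℝ c₁ (x, y) (1, 0))
          + (((fderiv ℝ f (x, y) (0, 1) * g (x, y) + f (x, y) * fderiv ℝ g (x, y) (0, 1)) * c₂ (x, y)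
            + f (x, y) * g (x, y) * fderiv ℝ c₂ (x, y) (0, 1))
            + f (x, y) * (fderiv ℝ c₁ (x, y) (1, 0) + fderiv ℝ c₂ (x, y) (0, 1)) * g (x, y))) := by
        refine congr_double
          (fun ζ : ℝ × ℝ => f ζ *
            (fderiv ℝ c₁ ζ (1, 0) * g ζ + c₁ ζ * fderiv ℝ g ζ (1, 0)
              + (fderiv ℝ c₂ ζ (0, 1) * g ζ + c₂ ζ * fderiv ℝ g ζ (0, 1)))
            + g ζ * (fderiv ℝ c₁ ζ (1, 0) * f ζ + c₁ ζ * fderiv ℝ f ζ (1, 0)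
              + (fderiv ℝ c₂ ζ (0, 1) * f ζ + c₂ ζ * fderiv ℝ f ζ (0, 1))))
          (fun ζ : ℝ × ℝ =>
            ((fderiv ℝ f ζ (1, 0) * g ζ + f ζ * fderiv ℝ g ζ (1, 0)) * c₁ ζ
              + f ζ * g ζ * fderiv ℝ c₁ ζ (1, 0))
            + (((fderiv ℝ f ζ (0, 1) * g ζ + f ζ * fderiv ℝ g ζ (0, 1)) * c₂ ζ
              + f ζ * g ζ * fderiv ℝ c₂ ζ (0, 1))
              + f ζ * (fderiv ℝ c₁ ζ (1, 0) + fderiv ℝ c₂ ζ (0, 1)) * g ζ))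
          ?_ L₁ L₂
        funext ζ
        ring
      _ = _ := (split_double hDAc (hDBc.add hE₃c) L₁ L₂).trans
        (congrArg (_ + ·) (split_double hDBc hE₃c L₁ L₂))
  linarith [hbig, hA, hB]

open Matrix in
/-- For the 2D FEM of the transport equation on the rectangle `Ω = [0,L₁] × [0,L₂]`,
the stiffness matrix `(F₁)_{ij} = -∬_Ω φᵢ div(c φⱼ) dζ` satisfies
`F₁ + F₁ᵀ = -Q_c - S` where `Q_c = ∬_Ω Φ div(c) Φᵀ dζ` and `S = ∮_Γ ΦΦᵀ cᵀn ds`. -/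
theorem fem_transport2d_F1_plus_F1transpose
    (N : ℕ) (L₁ L₂ : ℝ) (hL₁ : 0 < L₁) (hL₂ : 0 < L₂)
    (c : ℝ × ℝ → ℝ × ℝ) (hc : ContDiff ℝ 1 c)
    (Φ : ℝ × ℝ → Fin N → ℝ) (hΦ : ContDiff ℝ 1 Φ)
    (F₁ Qc S : Matrix (Fin N) (Fin N) ℝ)
    (hF₁ : F₁ = Matrix.of fun i j => -∫ ζ₁ in (0:ℝ)..L₁, ∫ ζ₂ in (0:ℝ)..L₂,
        Φ (ζ₁, ζ₂) i * (deriv (fun s => (c (s, ζ₂)).1 * Φ (s, ζ₂) j) ζ₁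
          + deriv (fun s => (c (ζ₁, s)).2 * Φ (ζ₁, s) j) ζ₂))
    (hQc : Qc = Matrix.of fun i j => ∫ ζ₁ in (0:ℝ)..L₁, ∫ ζ₂ in (0:ℝ)..L₂,
        Φ (ζ₁, ζ₂) i *
          (deriv (fun s => (c (s, ζ₂)).1) ζ₁ + deriv (fun s => (c (ζ₁, s)).2) ζ₂)
          * Φ (ζ₁, ζ₂) j)
    (hS : S = Matrix.of fun i j =>
        (∫ ζ₂ in (0:ℝ)..L₂, Φ (L₁, ζ₂) i * Φ (L₁, ζ₂) j * (c (L₁, ζ₂)).1)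
        - (∫ ζ₂ in (0:ℝ)..L₂, Φ (0, ζ₂) i * Φ (0, ζ₂) j * (c (0, ζ₂)).1)
        + (∫ ζ₁ in (0:ℝ)..L₁, Φ (ζ₁, L₂) i * Φ (ζ₁, L₂) j * (c (ζ₁, L₂)).2)
        - (∫ ζ₁ in (0:ℝ)..L₁, Φ (ζ₁, 0) i * Φ (ζ₁, 0) j * (c (ζ₁, 0)).2)) :
    F₁ + F₁ᵀ = -Qc - S := by
  subst hF₁ hQc hS
  ext i j
  simp only [Matrix.add_apply, Matrix.transpose_apply, Matrix.of_apply, Matrix.sub_apply,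
    Matrix.neg_apply]
  exact key L₁ L₂ hL₁.le hL₂.le (fun ζ => (c ζ).1) (fun ζ => (c ζ).2)
    (fun ζ => Φ ζ i) (fun ζ => Φ ζ j)
    (contDiff_fst.comp hc) (contDiff_snd.comp hc)
    (contDiff_pi.mp hΦ i) (contDiff_pi.mp hΦ j)
end

section
/- Let Ω = [0,L₁] × [0,L₂] be a rectangle, let c = (c₁,c₂) : ℝ² → ℝ² and Φ : ℝ² → ℝ^N be continuously differentiable, and define M = ∬_Ω Φ(ζ)Φ(ζ)ᵀ dζ, (F₁)_{ij} = -∬_Ω φᵢ(ζ) div(c φⱼ)(ζ) dζ, Q_c = ∬_Ω Φ(ζ) div(c)(ζ) Φ(ζ)ᵀ dζ, and the boundary matrix S = ∮_Γ ΦΦᵀ cᵀn ds (the signed sum of the four edge integrals of ΦΦᵀ times the normal component of c). Suppose x_d : ℝ → ℝ^N is differentiable and satisfies M ẋ_d(t) = F₁ x_d(t) for all t. Then the discretized Hamiltonian H_d(t) = (1/2) x_d(t)ᵀ M x_d(t) satisfies Ḣ_d(t) = -(1/2) x_d(t)ᵀ Q_c x_d(t) - (1/2) x_d(t)ᵀ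 S x_d(t); in particular, if div(c) = 0 on Ω then Ḣ_d(t) = -(1/2) x_d(t)ᵀ S x_d(t), so the finite element discretization preserves the scattering energy balance of the two-dimensional transport equation. -/
open MeasureTheory Set

section helpers

lemma slice1_hasDerivAt {F : ℝ × ℝ → ℝ} (hF : ContDiff ℝ 1 F) (a b : ℝ) :
    HasDerivAt (fun s => F (s, b)) (fderiv ℝ F (a, b) (1, 0)) a := by
  have h1 : HasDerivAt (fun s : ℝ => (s, b)) ((1 : ℝ), (0 : ℝ)) a :=
    (hasDerivAt_id a).prodMk (hasDerivAt_const a b)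
  exact ((hF.differentiable one_ne_zero (a, b)).hasFDerivAt).comp_hasDerivAt a h1

lemma slice2_hasDerivAt {F : ℝ × ℝ → ℝ} (hF : ContDiff ℝ 1 F) (a b : ℝ) :
    HasDerivAt (fun s => F (a, s)) (fderiv ℝ F (a, b) (0, 1)) b := by
  have h1 : HasDerivAt (fun s : ℝ => (a, s)) ((0 : ℝ), (1 : ℝ)) b :=
    (hasDerivAt_const b a).prodMk (hasDerivAt_id b)
  exact ((hF.differentiable one_ne_zero (a, b)).hasFDerivAt).comp_hasDerivAt b h1

lemma cont_fderiv_apply {F : ℝ × ℝ → ℝ} (hF : ContDiff ℝ 1 F) (v : ℝ × ℝ) :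
    Continuous fun p => fderiv ℝ F p v :=
  (hF.continuous_fderiv one_ne_zero).clm_apply continuous_const

lemma swap_cont {f : ℝ × ℝ → ℝ} (hf : Continuous f) {a b c d : ℝ} (hab : a ≤ b) (hcd : c ≤ d) :
    (∫ x in a..b, ∫ y in c..d, f (x, y)) = ∫ y in c..d, ∫ x in a..b, f (x, y) := by
  have hint : Integrable (Function.uncurry fun x y => f (x, y))
      ((volume.restrict (Ioc a b)).prod (volume.restrict (Ioc c d))) := by
    rw [Measure.prod_restrict]
    have h : Function.uncurry (fun x y => f (x, y)) = f := rfl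
    rw [h]
    exact (hf.continuousOn.integrableOn_compact (isCompact_Icc.prod isCompact_Icc)).mono_set
      (Set.prod_mono Ioc_subset_Icc_self Ioc_subset_Icc_self)
  rw [intervalIntegral.integral_of_le hab]
  simp_rw [intervalIntegral.integral_of_le hcd, intervalIntegral.integral_of_le hab]
  exact MeasureTheory.integral_integral_swap hint

lemma intInt_add {g h : ℝ × ℝ → ℝ} (hg : Continuous g) (hh : Continuous h) (a b c d : ℝ) :
    (∫ x in a..b, ∫ y in c..d, (g (x, y) + h (x, y))) =
      (∫ x in a..b, ∫ y in c..d, g (x, y)) + ∫ x in a..b, ∫ y in c..d, h (x, y) := by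
  have hinner : ∀ x : ℝ, (∫ y in c..d, (g (x, y) + h (x, y))) =
      (∫ y in c..d, g (x, y)) + ∫ y in c..d, h (x, y) := fun x =>
    intervalIntegral.integral_add
      ((hg.comp (continuous_const.prodMk continuous_id)).intervalIntegrable _ _)
      ((hh.comp (continuous_const.prodMk continuous_id)).intervalIntegrable _ _)
  simp_rw [hinner]
  exact intervalIntegral.integral_add
    ((intervalIntegral.continuous_parametric_intervalIntegral_of_continuous'
        (f := fun x y => g (x, y)) hg c d).intervalIntegrable _ _)
    ((intervalIntegral.continuous_parametric_intervalIntegral_of_continuous'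
        (f := fun x y => h (x, y)) hh c d).intervalIntegrable _ _)

lemma ftc2 {G : ℝ × ℝ → ℝ} (hG : ContDiff ℝ 1 G) (x c d : ℝ) :
    (∫ y in c..d, fderiv ℝ G (x, y) (0, 1)) = G (x, d) - G (x, c) := by
  apply intervalIntegral.integral_eq_sub_of_hasDerivAt
  · intro y _; exact slice2_hasDerivAt hG x y
  · exact ((cont_fderiv_apply hG (0, 1)).comp
      (continuous_const.prodMk continuous_id)).intervalIntegrable _ _

lemma ftc1 {G : ℝ × ℝ → ℝ} (hG : ContDiff ℝ 1 G) (y c d : ℝ) :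
    (∫ x in c..d, fderiv ℝ G (x, y) (1, 0)) = G (d, y) - G (c, y) := by
  apply intervalIntegral.integral_eq_sub_of_hasDerivAt
  · intro x _; exact slice1_hasDerivAt hG x y
  · exact ((cont_fderiv_apply hG (1, 0)).comp
      (continuous_id.prodMk continuous_const)).intervalIntegrable _ _

lemma fderiv_mul_apply' {f g : ℝ × ℝ → ℝ} (hf : ContDiff ℝ 1 f) (hg : ContDiff ℝ 1 g)
    (p w : ℝ × ℝ) :
    fderiv ℝ (fun q => f q * g q) p w = f p * fderiv ℝ g p w + g p * fderiv ℝ f p w := by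
  rw [fderiv_fun_mul (hf.differentiable one_ne_zero p) (hg.differentiable one_ne_zero p)]
  simp [smul_eq_mul]

lemma key_identity {c1 c2 u v : ℝ × ℝ → ℝ} (hc1 : ContDiff ℝ 1 c1) (hc2 : ContDiff ℝ 1 c2)
    (hu : ContDiff ℝ 1 u) (hv : ContDiff ℝ 1 v) {L₁ L₂ : ℝ} (h1 : 0 ≤ L₁) (h2 : 0 ≤ L₂) :
    (∫ ζ₁ in (0:ℝ)..L₁, ∫ ζ₂ in (0:ℝ)..L₂,
        u (ζ₁, ζ₂) * (deriv (fun s => c1 (s, ζ₂) * v (s, ζ₂)) ζ₁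
          + deriv (fun s => c2 (ζ₁, s) * v (ζ₁, s)) ζ₂))
    + (∫ ζ₁ in (0:ℝ)..L₁, ∫ ζ₂ in (0:ℝ)..L₂,
        v (ζ₁, ζ₂) * (deriv (fun s => c1 (s, ζ₂) * u (s, ζ₂)) ζ₁
          + deriv (fun s => c2 (ζ₁, s) * u (ζ₁, s)) ζ₂))
    = (∫ ζ₁ in (0:ℝ)..L₁, ∫ ζ₂ in (0:ℝ)..L₂,
        u (ζ₁, ζ₂) * (deriv (fun s => c1 (s, ζ₂)) ζ₁ + deriv (fun s => c2 (ζ₁, s)) ζ₂)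
          * v (ζ₁, ζ₂))
    + ((∫ ζ₂ in (0:ℝ)..L₂, u (L₁, ζ₂) * v (L₁, ζ₂) * c1 (L₁, ζ₂))
      - (∫ ζ₂ in (0:ℝ)..L₂, u (0, ζ₂) * v (0, ζ₂) * c1 (0, ζ₂))
      + (∫ ζ₁ in (0:ℝ)..L₁, u (ζ₁, L₂) * v (ζ₁, L₂) * c2 (ζ₁, L₂))
      - (∫ ζ₁ in (0:ℝ)..L₁, u (ζ₁, 0) * v (ζ₁, 0) * c2 (ζ₁, 0))) := by
  have hcv : ContDiff ℝ 1 (fun p => c1 p * v p) := hc1.mul hv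
  have hc2v : ContDiff ℝ 1 (fun p => c2 p * v p) := hc2.mul hv
  have hcu : ContDiff ℝ 1 (fun p => c1 p * u p) := hc1.mul hu
  have hc2u : ContDiff ℝ 1 (fun p => c2 p * u p) := hc2.mul hu
  have hG1 : ContDiff ℝ 1 (fun p => u p * v p * c1 p) := (hu.mul hv).mul hc1
  have hG2 : ContDiff ℝ 1 (fun p => u p * v p * c2 p) := (hu.mul hv).mul hc2
  have r1 : ∀ a b : ℝ, deriv (fun s => c1 (s, b) * v (s, b)) a
      = fderiv ℝ (fun p => c1 p * v p) (a, b) (1, 0) :=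
    fun a b => (slice1_hasDerivAt hcv a b).deriv
  have r2 : ∀ a b : ℝ, deriv (fun s => c2 (a, s) * v (a, s)) b
      = fderiv ℝ (fun p => c2 p * v p) (a, b) (0, 1) :=
    fun a b => (slice2_hasDerivAt hc2v a b).deriv
  have r3 : ∀ a b : ℝ, deriv (fun s => c1 (s, b) * u (s, b)) a
      = fderiv ℝ (fun p => c1 p * u p) (a, b) (1, 0) :=
    fun a b => (slice1_hasDerivAt hcu a b).deriv
  have r4 : ∀ a b : ℝ, deriv (fun s => c2 (a, s) * u (a, s)) b
      = fderiv ℝ (fun p => c2 p * u p) (a, b) (0, 1) :=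
    fun a b => (slice2_hasDerivAt hc2u a b).deriv
  have r5 : ∀ a b : ℝ, deriv (fun s => c1 (s, b)) a = fderiv ℝ c1 (a, b) (1, 0) :=
    fun a b => (slice1_hasDerivAt hc1 a b).deriv
  have r6 : ∀ a b : ℝ, deriv (fun s => c2 (a, s)) b = fderiv ℝ c2 (a, b) (0, 1) :=
    fun a b => (slice2_hasDerivAt hc2 a b).deriv
  simp_rw [r1, r2, r3, r4, r5, r6]
  -- pointwise identity
  have hpt : ∀ a b : ℝ,
      u (a, b) * (fderiv ℝ (fun p => c1 p * v p) (a, b) (1, 0)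
          + fderiv ℝ (fun p => c2 p * v p) (a, b) (0, 1))
        + v (a, b) * (fderiv ℝ (fun p => c1 p * u p) (a, b) (1, 0)
          + fderiv ℝ (fun p => c2 p * u p) (a, b) (0, 1))
      = u (a, b) * (fderiv ℝ c1 (a, b) (1, 0) + fderiv ℝ c2 (a, b) (0, 1)) * v (a, b)
        + (fderiv ℝ (fun p => u p * v p * c1 p) (a, b) (1, 0)
          + fderiv ℝ (fun p => u p * v p * c2 p) (a, b) (0, 1)) := by
    intro a b
    rw [fderiv_mul_apply' hc1 hv, fderiv_mul_apply' hc2 hv, fderiv_mul_apply' hc1 hu,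
      fderiv_mul_apply' hc2 hu,
      fderiv_mul_apply' (f := fun p => u p * v p) (g := c1) (hu.mul hv) hc1,
      fderiv_mul_apply' (f := fun p => u p * v p) (g := c2) (hu.mul hv) hc2,
      fderiv_mul_apply' hu hv]
    simp only [fderiv_mul_apply' hu hv]
    ring
  -- continuity facts
  have cf1 : Continuous fun p : ℝ × ℝ => u p * (fderiv ℝ (fun p => c1 p * v p) p (1, 0)
      + fderiv ℝ (fun p => c2 p * v p) p (0, 1)) :=
    (hu.continuous).mul ((cont_fderiv_apply hcv _).add (cont_fderiv_apply hc2v _))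
  have cf2 : Continuous fun p : ℝ × ℝ => v p * (fderiv ℝ (fun p => c1 p * u p) p (1, 0)
      + fderiv ℝ (fun p => c2 p * u p) p (0, 1)) :=
    (hv.continuous).mul ((cont_fderiv_apply hcu _).add (cont_fderiv_apply hc2u _))
  have cq : Continuous fun p : ℝ × ℝ =>
      u p * (fderiv ℝ c1 p (1, 0) + fderiv ℝ c2 p (0, 1)) * v p :=
    ((hu.continuous).mul ((cont_fderiv_apply hc1 _).add (cont_fderiv_apply hc2 _))).mul
      hv.continuous
  have cd1 : Continuous fun p : ℝ × ℝ => fderiv ℝ (fun p => u p * v p * c1 p) p (1, 0) :=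
    cont_fderiv_apply hG1 _
  have cd2 : Continuous fun p : ℝ × ℝ => fderiv ℝ (fun p => u p * v p * c2 p) p (0, 1) :=
    cont_fderiv_apply hG2 _
  -- merge the two double integrals
  have hmerge : (∫ ζ₁ in (0:ℝ)..L₁, ∫ ζ₂ in (0:ℝ)..L₂,
        u (ζ₁, ζ₂) * (fderiv ℝ (fun p => c1 p * v p) (ζ₁, ζ₂) (1, 0)
          + fderiv ℝ (fun p => c2 p * v p) (ζ₁, ζ₂) (0, 1)))
      + (∫ ζ₁ in (0:ℝ)..L₁, ∫ ζ₂ in (0:ℝ)..L₂,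
        v (ζ₁, ζ₂) * (fderiv ℝ (fun p => c1 p * u p) (ζ₁, ζ₂) (1, 0)
          + fderiv ℝ (fun p => c2 p * u p) (ζ₁, ζ₂) (0, 1)))
      = ∫ ζ₁ in (0:ℝ)..L₁, ∫ ζ₂ in (0:ℝ)..L₂,
        (u (ζ₁, ζ₂) * (fderiv ℝ (fun p => c1 p * v p) (ζ₁, ζ₂) (1, 0)
          + fderiv ℝ (fun p => c2 p * v p) (ζ₁, ζ₂) (0, 1))
        + v (ζ₁, ζ₂) * (fderiv ℝ (fun p => c1 p * u p) (ζ₁, ζ₂) (1, 0)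
          + fderiv ℝ (fun p => c2 p * u p) (ζ₁, ζ₂) (0, 1))) :=
    (intInt_add cf1 cf2 0 L₁ 0 L₂).symm
  rw [hmerge]
  simp_rw [hpt]
  have hsplit : (∫ ζ₁ in (0:ℝ)..L₁, ∫ ζ₂ in (0:ℝ)..L₂,
        (u (ζ₁, ζ₂) * (fderiv ℝ c1 (ζ₁, ζ₂) (1, 0) + fderiv ℝ c2 (ζ₁, ζ₂) (0, 1)) * v (ζ₁, ζ₂)
          + (fderiv ℝ (fun p => u p * v p * c1 p) (ζ₁, ζ₂) (1, 0)
            + fderiv ℝ (fun p => u p * v p * c2 p) (ζ₁, ζ₂) (0, 1))))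
      = (∫ ζ₁ in (0:ℝ)..L₁, ∫ ζ₂ in (0:ℝ)..L₂,
          u (ζ₁, ζ₂) * (fderiv ℝ c1 (ζ₁, ζ₂) (1, 0) + fderiv ℝ c2 (ζ₁, ζ₂) (0, 1)) * v (ζ₁, ζ₂))
        + ∫ ζ₁ in (0:ℝ)..L₁, ∫ ζ₂ in (0:ℝ)..L₂,
          (fderiv ℝ (fun p => u p * v p * c1 p) (ζ₁, ζ₂) (1, 0)
            + fderiv ℝ (fun p => u p * v p * c2 p) (ζ₁, ζ₂) (0, 1)) :=
    intInt_add cq (cd1.add cd2) 0 L₁ 0 L₂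
  rw [hsplit]
  have hdd : (∫ ζ₁ in (0:ℝ)..L₁, ∫ ζ₂ in (0:ℝ)..L₂,
        (fderiv ℝ (fun p => u p * v p * c1 p) (ζ₁, ζ₂) (1, 0)
          + fderiv ℝ (fun p => u p * v p * c2 p) (ζ₁, ζ₂) (0, 1)))
      = (∫ ζ₁ in (0:ℝ)..L₁, ∫ ζ₂ in (0:ℝ)..L₂,
          fderiv ℝ (fun p => u p * v p * c1 p) (ζ₁, ζ₂) (1, 0))
        + ∫ ζ₁ in (0:ℝ)..L₁, ∫ ζ₂ in (0:ℝ)..L₂,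
          fderiv ℝ (fun p => u p * v p * c2 p) (ζ₁, ζ₂) (0, 1) :=
    intInt_add cd1 cd2 0 L₁ 0 L₂
  rw [hdd]
  -- the D₁ term via Fubini + FTC
  have hD1 : (∫ ζ₁ in (0:ℝ)..L₁, ∫ ζ₂ in (0:ℝ)..L₂,
        fderiv ℝ (fun p => u p * v p * c1 p) (ζ₁, ζ₂) (1, 0))
      = (∫ ζ₂ in (0:ℝ)..L₂, u (L₁, ζ₂) * v (L₁, ζ₂) * c1 (L₁, ζ₂))
        - ∫ ζ₂ in (0:ℝ)..L₂, u (0, ζ₂) * v (0, ζ₂) * c1 (0, ζ₂) := by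
    have hswap : (∫ ζ₁ in (0:ℝ)..L₁, ∫ ζ₂ in (0:ℝ)..L₂,
          fderiv ℝ (fun p => u p * v p * c1 p) (ζ₁, ζ₂) (1, 0))
        = ∫ ζ₂ in (0:ℝ)..L₂, ∫ ζ₁ in (0:ℝ)..L₁,
          fderiv ℝ (fun p => u p * v p * c1 p) (ζ₁, ζ₂) (1, 0) :=
      swap_cont cd1 h1 h2
    rw [hswap]
    have hin : ∀ y : ℝ, (∫ ζ₁ in (0:ℝ)..L₁,
        fderiv ℝ (fun p => u p * v p * c1 p) (ζ₁, y) (1, 0))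
        = u (L₁, y) * v (L₁, y) * c1 (L₁, y) - u (0, y) * v (0, y) * c1 (0, y) :=
      fun y => ftc1 hG1 y 0 L₁
    simp_rw [hin]
    have cb : ∀ x0 : ℝ, Continuous fun y : ℝ => u (x0, y) * v (x0, y) * c1 (x0, y) :=
      fun x0 => ((hu.continuous.comp (continuous_const.prodMk continuous_id)).mul
        (hv.continuous.comp (continuous_const.prodMk continuous_id))).mul
        (hc1.continuous.comp (continuous_const.prodMk continuous_id))
    exact intervalIntegral.integral_sub ((cb L₁).intervalIntegrable _ _)
      ((cb 0).intervalIntegrable _ _)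
  -- the D₂ term via FTC
  have hD2 : (∫ ζ₁ in (0:ℝ)..L₁, ∫ ζ₂ in (0:ℝ)..L₂,
        fderiv ℝ (fun p => u p * v p * c2 p) (ζ₁, ζ₂) (0, 1))
      = (∫ ζ₁ in (0:ℝ)..L₁, u (ζ₁, L₂) * v (ζ₁, L₂) * c2 (ζ₁, L₂))
        - ∫ ζ₁ in (0:ℝ)..L₁, u (ζ₁, 0) * v (ζ₁, 0) * c2 (ζ₁, 0) := by
    have hin : ∀ x : ℝ, (∫ ζ₂ in (0:ℝ)..L₂,
        fderiv ℝ (fun p => u p * v p * c2 p) (x, ζ₂) (0, 1))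
        = u (x, L₂) * v (x, L₂) * c2 (x, L₂) - u (x, 0) * v (x, 0) * c2 (x, 0) :=
      fun x => ftc2 hG2 x 0 L₂
    simp_rw [hin]
    have cb : ∀ y0 : ℝ, Continuous fun x : ℝ => u (x, y0) * v (x, y0) * c2 (x, y0) :=
      fun y0 => ((hu.continuous.comp (continuous_id.prodMk continuous_const)).mul
        (hv.continuous.comp (continuous_id.prodMk continuous_const))).mul
        (hc2.continuous.comp (continuous_id.prodMk continuous_const))
    exact intervalIntegral.integral_sub ((cb L₂).intervalIntegrable _ _)
      ((cb 0).intervalIntegrable _ _)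
  rw [hD1, hD2]
  ring

end helpers

open Matrix in
/-- The 2D finite element discretization `M ẋ_d = F₁ x_d` of the transport equation on
the rectangle `Ω = [0,L₁] × [0,L₂]` satisfies the discrete energy balance
`Ḣ_d = -(1/2) x_dᵀ Q_c x_d - (1/2) x_dᵀ S x_d`; in particular, if `div(c) = 0` on `Ω`
then `Ḣ_d = -(1/2) x_dᵀ S x_d`, i.e. the scattering energy balance is preserved. -/
theorem fem_transport2d_discrete_energy_balance
    (N : ℕ) (L₁ L₂ : ℝ) (hL₁ : 0 < L₁) (hL₂ : 0 < L₂)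
    (c : ℝ × ℝ → ℝ × ℝ) (hc : ContDiff ℝ 1 c)
    (Φ : ℝ × ℝ → Fin N → ℝ) (hΦ : ContDiff ℝ 1 Φ)
    (M F₁ Qc S : Matrix (Fin N) (Fin N) ℝ)
    (hM : M = Matrix.of fun i j => ∫ ζ₁ in (0:ℝ)..L₁, ∫ ζ₂ in (0:ℝ)..L₂,
        Φ (ζ₁, ζ₂) i * Φ (ζ₁, ζ₂) j)
    (hF₁ : F₁ = Matrix.of fun i j => -∫ ζ₁ in (0:ℝ)..L₁, ∫ ζ₂ in (0:ℝ)..L₂,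
        Φ (ζ₁, ζ₂) i * (deriv (fun s => (c (s, ζ₂)).1 * Φ (s, ζ₂) j) ζ₁
          + deriv (fun s => (c (ζ₁, s)).2 * Φ (ζ₁, s) j) ζ₂))
    (hQc : Qc = Matrix.of fun i j => ∫ ζ₁ in (0:ℝ)..L₁, ∫ ζ₂ in (0:ℝ)..L₂,
        Φ (ζ₁, ζ₂) i *
          (deriv (fun s => (c (s, ζ₂)).1) ζ₁ + deriv (fun s => (c (ζ₁, s)).2) ζ₂)
          * Φ (ζ₁, ζ₂) j)
    (hS : S = Matrix.of fun i j =>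
        (∫ ζ₂ in (0:ℝ)..L₂, Φ (L₁, ζ₂) i * Φ (L₁, ζ₂) j * (c (L₁, ζ₂)).1)
        - (∫ ζ₂ in (0:ℝ)..L₂, Φ (0, ζ₂) i * Φ (0, ζ₂) j * (c (0, ζ₂)).1)
        + (∫ ζ₁ in (0:ℝ)..L₁, Φ (ζ₁, L₂) i * Φ (ζ₁, L₂) j * (c (ζ₁, L₂)).2)
        - (∫ ζ₁ in (0:ℝ)..L₁, Φ (ζ₁, 0) i * Φ (ζ₁, 0) j * (c (ζ₁, 0)).2))
    (x_d : ℝ → Fin N → ℝ) (hx_d : Differentiable ℝ x_d)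
    (hdyn : ∀ t : ℝ, M *ᵥ deriv x_d t = F₁ *ᵥ x_d t) :
    (∀ t : ℝ, HasDerivAt (fun s => (1 / 2) * (x_d s ⬝ᵥ (M *ᵥ x_d s)))
        (-(1 / 2) * (x_d t ⬝ᵥ (Qc *ᵥ x_d t)) - (1 / 2) * (x_d t ⬝ᵥ (S *ᵥ x_d t))) t) ∧
    ((∀ ζ₁ ∈ Set.Icc 0 L₁, ∀ ζ₂ ∈ Set.Icc 0 L₂,
        deriv (fun s => (c (s, ζ₂)).1) ζ₁ + deriv (fun s => (c (ζ₁, s)).2) ζ₂ = 0) →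
      ∀ t : ℝ, HasDerivAt (fun s => (1 / 2) * (x_d s ⬝ᵥ (M *ᵥ x_d s)))
        (-(1 / 2) * (x_d t ⬝ᵥ (S *ᵥ x_d t))) t) := by
  have hφ : ∀ i, ContDiff ℝ 1 fun p : ℝ × ℝ => Φ p i := fun i => contDiff_pi.mp hΦ i
  have hc1 : ContDiff ℝ 1 fun p : ℝ × ℝ => (c p).1 := hc.fst
  have hc2 : ContDiff ℝ 1 fun p : ℝ × ℝ => (c p).2 := hc.snd
  -- the key matrix identity  F₁ + F₁ᵀ = -(Qc + S)
  have hkey : ∀ i j, F₁ i j + F₁ j i = -(Qc i j + S i j) := by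
    intro i j
    rw [hF₁, hQc, hS]
    simp only [Matrix.of_apply]
    have h2 : (∫ ζ₁ in (0:ℝ)..L₁, ∫ ζ₂ in (0:ℝ)..L₂,
          Φ (ζ₁, ζ₂) i * (deriv (fun s => (c (s, ζ₂)).1 * Φ (s, ζ₂) j) ζ₁
            + deriv (fun s => (c (ζ₁, s)).2 * Φ (ζ₁, s) j) ζ₂))
        + (∫ ζ₁ in (0:ℝ)..L₁, ∫ ζ₂ in (0:ℝ)..L₂,
          Φ (ζ₁, ζ₂) j * (deriv (fun s => (c (s, ζ₂)).1 * Φ (s, ζ₂) i) ζ₁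
            + deriv (fun s => (c (ζ₁, s)).2 * Φ (ζ₁, s) i) ζ₂))
        = (∫ ζ₁ in (0:ℝ)..L₁, ∫ ζ₂ in (0:ℝ)..L₂,
            Φ (ζ₁, ζ₂) i *
              (deriv (fun s => (c (s, ζ₂)).1) ζ₁ + deriv (fun s => (c (ζ₁, s)).2) ζ₂)
              * Φ (ζ₁, ζ₂) j)
          + ((∫ ζ₂ in (0:ℝ)..L₂, Φ (L₁, ζ₂) i * Φ (L₁, ζ₂) j * (c (L₁, ζ₂)).1)
            - (∫ ζ₂ in (0:ℝ)..L₂, Φ (0, ζ₂) i * Φ (0, ζ₂) j * (c (0, ζ₂)).1)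
            + (∫ ζ₁ in (0:ℝ)..L₁, Φ (ζ₁, L₂) i * Φ (ζ₁, L₂) j * (c (ζ₁, L₂)).2)
            - (∫ ζ₁ in (0:ℝ)..L₁, Φ (ζ₁, 0) i * Φ (ζ₁, 0) j * (c (ζ₁, 0)).2)) :=
      key_identity hc1 hc2 (hφ i) (hφ j) hL₁.le hL₂.le
    linarith
  -- generic transpose fact for quadratic forms
  have hgen : ∀ (A : Matrix (Fin N) (Fin N) ℝ) (x y : Fin N → ℝ),
      x ⬝ᵥ (A *ᵥ y) = y ⬝ᵥ (Aᵀ *ᵥ x) := by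
    intro A x y
    rw [Matrix.dotProduct_mulVec, dotProduct_comm, ← Matrix.mulVec_transpose]
  have hMT : Mᵀ = M := by
    rw [hM]; ext i j
    simp only [Matrix.transpose_apply, Matrix.of_apply]
    simp_rw [mul_comm]
  -- the main derivative computation
  have hmain : ∀ t : ℝ, HasDerivAt (fun s => (1 / 2) * (x_d s ⬝ᵥ (M *ᵥ x_d s)))
      (-(1 / 2) * (x_d t ⬝ᵥ (Qc *ᵥ x_d t)) - (1 / 2) * (x_d t ⬝ᵥ (S *ᵥ x_d t))) t := by
    intro t
    set x := x_d t with hx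
    set x' := deriv x_d t with hx'
    have hxd : HasDerivAt x_d x' t := (hx_d t).hasDerivAt
    have hcomp : ∀ i, HasDerivAt (fun s => x_d s i) (x' i) t := fun i =>
      (ContinuousLinearMap.proj (R := ℝ) (φ := fun _ : Fin N => ℝ)
        i).hasFDerivAt.comp_hasDerivAt t hxd
    have h1 : HasDerivAt (fun s => ∑ i, x_d s i * ∑ j, M i j * x_d s j)
        (∑ i, (x' i * ∑ j, M i j * x j + x i * ∑ j, M i j * x' j)) t :=
      HasDerivAt.fun_sum fun i _ =>
        (hcomp i).mul (HasDerivAt.fun_sum fun j _ => (hcomp j).const_mul (M i j))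
    have h2 : x' ⬝ᵥ (M *ᵥ x) + x ⬝ᵥ (M *ᵥ x')
        = ∑ i, (x' i * ∑ j, M i j * x j + x i * ∑ j, M i j * x' j) := by
      simp [dotProduct, Matrix.mulVec, Finset.sum_add_distrib]
    have hq : HasDerivAt (fun s => x_d s ⬝ᵥ (M *ᵥ x_d s))
        (x' ⬝ᵥ (M *ᵥ x) + x ⬝ᵥ (M *ᵥ x')) t := by
      rw [h2]; exact h1
    have hH : HasDerivAt (fun s => (1 / 2) * (x_d s ⬝ᵥ (M *ᵥ x_d s)))
        ((1 / 2) * (x' ⬝ᵥ (M *ᵥ x) + x ⬝ᵥ (M *ᵥ x'))) t := hq.const_mul (1 / 2)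
    have hsym : x' ⬝ᵥ (M *ᵥ x) = x ⬝ᵥ (M *ᵥ x') := by
      rw [hgen M x' x, hMT]
    have hdynt : x ⬝ᵥ (M *ᵥ x') = x ⬝ᵥ (F₁ *ᵥ x) := by rw [hx', hdyn t]
    have hFT : x ⬝ᵥ (F₁ *ᵥ x) = x ⬝ᵥ (F₁ᵀ *ᵥ x) := by
      rw [hgen F₁ x x]
    have hsum : F₁ + F₁ᵀ = -(Qc + S) := by
      ext i j
      simp only [Matrix.add_apply, Matrix.neg_apply, Matrix.transpose_apply]
      exact hkey i j
    have e1 : x ⬝ᵥ ((F₁ + F₁ᵀ) *ᵥ x) = x ⬝ᵥ (F₁ *ᵥ x) + x ⬝ᵥ (F₁ᵀ *ᵥ x) := by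
      rw [Matrix.add_mulVec, dotProduct_add]
    have e2 : x ⬝ᵥ ((F₁ + F₁ᵀ) *ᵥ x) = -(x ⬝ᵥ (Qc *ᵥ x)) - x ⬝ᵥ (S *ᵥ x) := by
      rw [hsum, Matrix.neg_mulVec, dotProduct_neg, Matrix.add_mulVec,
        dotProduct_add]
      ring
    have hval : (1 / 2) * (x' ⬝ᵥ (M *ᵥ x) + x ⬝ᵥ (M *ᵥ x'))
        = -(1 / 2) * (x ⬝ᵥ (Qc *ᵥ x)) - (1 / 2) * (x ⬝ᵥ (S *ᵥ x)) := by
      rw [hsym, hdynt]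
      linarith [e1, e2, hFT]
    rw [← hval]
    exact hH
  refine ⟨hmain, fun hdiv t => ?_⟩
  have hQc0 : Qc = 0 := by
    rw [hQc]; ext i j
    simp only [Matrix.of_apply, Matrix.zero_apply]
    have h1 : Set.EqOn (fun ζ₁ => ∫ ζ₂ in (0:ℝ)..L₂,
        Φ (ζ₁, ζ₂) i *
          (deriv (fun s => (c (s, ζ₂)).1) ζ₁ + deriv (fun s => (c (ζ₁, s)).2) ζ₂)
          * Φ (ζ₁, ζ₂) j) (fun _ => (0:ℝ)) (Set.uIcc 0 L₁) := by
      intro ζ₁ hζ₁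
      have h2 : Set.EqOn (fun ζ₂ => Φ (ζ₁, ζ₂) i *
          (deriv (fun s => (c (s, ζ₂)).1) ζ₁ + deriv (fun s => (c (ζ₁, s)).2) ζ₂)
          * Φ (ζ₁, ζ₂) j) (fun _ => (0:ℝ)) (Set.uIcc 0 L₂) := by
        intro ζ₂ hζ₂
        have hz := hdiv ζ₁ (by rwa [Set.uIcc_of_le hL₁.le] at hζ₁) ζ₂
          (by rwa [Set.uIcc_of_le hL₂.le] at hζ₂)
        simp [hz]
      simp [intervalIntegral.integral_congr h2]
    rw [intervalIntegral.integral_congr h1]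
    simp
  have := hmain t
  rw [hQc0] at this
  simpa using this
end

section
/- Let a < b, let 𝓗₀ > 0 be a constant Hamiltonian density, and let Φ : ℝ × ℝ → ℝ^N be continuously differentiable. Define the time-varying matrices E(t) = ∫_a^b Φ(ζ,t)Φ(ζ,t)ᵀ dζ and F(t) = -Φ(a,t)Φ(a,t)ᵀ - ∫_a^b ∂_ζΦ(ζ,t)Φ(ζ,t)ᵀ dζ - (1/𝓗₀) ∫_a^b Φ(ζ,t) ∂ₜΦ(ζ,t)ᵀ dζ, and set B(t) = Φ(b,t). Suppose x_d : ℝ → ℝ^N and u : ℝ → ℝ are differentiable functions satisfying, for all t: E(t) ẋ_d(t) = F(t) e_d(t) + B(t) u(t) with e_d(t) = 𝓗₀ x_d(t), and u(t) = Φ(b,t)ᵀ e_d(t); define the output y(t) = Φ(a,t)ᵀ e_d(t). Then the discretized Hamiltonian H_d(t) = (1/2) 𝓗₀ x_d(t)ᵀ E(t) x_d(t) is differentiable and satisfies Ḣ_d(t) = (1/2)(u(t)² - y(t)²); that is, when the Hamiltonian density is uniform in space, the moving mesh finite element discretization preserves the scattering energy preserving structure for any time parametrization of the basis functions. -/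
open MeasureTheory intervalIntegral Metric

/-- Differentiation under the interval integral sign for `C¹` integrands. -/
lemma hasDerivAt_integral_param (g : ℝ × ℝ → ℝ) (hg : ContDiff ℝ 1 g) (a b t : ℝ) :
    HasDerivAt (fun s => ∫ ζ in a..b, g (ζ, s))
      (∫ ζ in a..b, deriv (fun s => g (ζ, s)) t) t := by
  have hgd : Differentiable ℝ g := hg.differentiable one_ne_zero
  have hfd : Continuous (fun p : ℝ × ℝ => fderiv ℝ g p) := hg.continuous_fderiv one_ne_zero
  set F' : ℝ → ℝ → ℝ := fun x ζ => fderiv ℝ g (ζ, x) (0, 1) with hF'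
  have key : ∀ ζ x : ℝ, HasDerivAt (fun s => g (ζ, s)) (F' x ζ) x := by
    intro ζ x
    have h1 : HasDerivAt (fun s : ℝ => ((ζ, s) : ℝ × ℝ)) (0, 1) x :=
      (hasDerivAt_const x ζ).prodMk (hasDerivAt_id x)
    exact (hgd (ζ, x)).hasFDerivAt.comp_hasDerivAt x h1
  obtain ⟨C, hC⟩ : ∃ C, ∀ p ∈ (Set.uIcc a b) ×ˢ closedBall t 1, ‖fderiv ℝ g p‖ ≤ C := by
    rcases (isCompact_uIcc.prod (isCompact_closedBall t 1)).exists_bound_of_continuousOn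
      hfd.continuousOn with ⟨C, hC⟩
    exact ⟨C, hC⟩
  have main := hasDerivAt_integral_of_dominated_loc_of_deriv_le (F := fun x ζ => g (ζ, x))
    (F' := F') (x₀ := t) (bound := fun _ => C) (a := a) (b := b) (μ := volume)
    (ball_mem_nhds t (by norm_num : (0:ℝ) < 1))
    (Filter.Eventually.of_forall fun x =>
      ((hg.continuous.comp (continuous_id.prodMk continuous_const)).aestronglyMeasurable))
    ((hg.continuous.comp (continuous_id.prodMk continuous_const)).intervalIntegrable a b)
    ((hfd.comp (continuous_id.prodMk continuous_const)).clm_apply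
      continuous_const).aestronglyMeasurable
    ?_ (intervalIntegrable_const) ?_
  · refine main.2.congr_deriv (Eq.symm ?_)
    refine intervalIntegral.integral_congr fun ζ _ => ?_
    exact (key ζ t).deriv
  · refine Filter.Eventually.of_forall ?_
    intro ζ hζ x hx
    have : ‖fderiv ℝ g (ζ, x)‖ ≤ C := by
      apply hC
      constructor
      · exact Set.mem_of_mem_of_subset hζ Set.uIoc_subset_uIcc
      · exact ball_subset_closedBall hx
    calc ‖F' x ζ‖ ≤ ‖fderiv ℝ g (ζ, x)‖ * ‖((0:ℝ), (1:ℝ))‖ :=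
          (fderiv ℝ g (ζ, x)).le_opNorm _
      _ ≤ C * 1 := by
          apply mul_le_mul this _ (norm_nonneg _) ((norm_nonneg _).trans this)
          simp [Prod.norm_def]
      _ = C := mul_one C
  · exact Filter.Eventually.of_forall fun ζ _ x _ => key ζ x


open intervalIntegral in
/-- Swapping a double finite sum with an interval integral for quadratic-form expressions. -/
lemma sum_sum_integral_eq {N : ℕ} (a b : ℝ) (v w : Fin N → ℝ) (g h : ℝ → Fin N → ℝ)
    (hg : ∀ i, Continuous (fun ζ => g ζ i)) (hh : ∀ j, Continuous (fun ζ => h ζ j)) :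
    ∑ i, ∑ j, v i * ((∫ ζ in a..b, g ζ i * h ζ j) * w j)
      = ∫ ζ in a..b, (∑ i, g ζ i * v i) * (∑ j, h ζ j * w j) := by
  have hpt : ∀ ζ, (∑ i, g ζ i * v i) * (∑ j, h ζ j * w j)
      = ∑ i, ∑ j, v i * (g ζ i * h ζ j * w j) := by
    intro ζ
    rw [Finset.sum_mul_sum]
    exact Finset.sum_congr rfl fun i _ => Finset.sum_congr rfl fun j _ => by ring
  rw [intervalIntegral.integral_congr (fun ζ _ => hpt ζ)]
  rw [intervalIntegral.integral_finset_sum (fun i _ => ?_)]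
  · refine Finset.sum_congr rfl fun i _ => ?_
    rw [intervalIntegral.integral_finset_sum (fun j _ => ?_)]
    · refine Finset.sum_congr rfl fun j _ => ?_
      rw [intervalIntegral.integral_const_mul, intervalIntegral.integral_mul_const]
    · exact (continuous_const.mul (((hg i).mul (hh j)).mul continuous_const)).intervalIntegrable a b
  · exact (Continuous.intervalIntegrable (by
      exact continuous_finset_sum _ fun j _ =>
        continuous_const.mul (((hg i).mul (hh j)).mul continuous_const)) a b)

open Matrix in
/-- With a constant (uniform in space) Hamiltonian density `𝓗₀ > 0`, the moving mesh
finite element discretization of the one-dimensional transport equation preserves the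
scattering energy preserving structure for any time parametrization of the basis
functions: the discretized Hamiltonian `H_d(t) = (1/2) 𝓗₀ x_dᵀ E(t) x_d` satisfies
`Ḣ_d = (1/2)(u² - y²)`. -/
theorem moving_mesh_discrete_scattering_energy_balance
    (N : ℕ) (a b : ℝ) (hab : a < b) (𝓗₀ : ℝ) (h𝓗₀ : 0 < 𝓗₀)
    (Φ : ℝ × ℝ → Fin N → ℝ) (hΦ : ContDiff ℝ 1 Φ)
    (E F : ℝ → Matrix (Fin N) (Fin N) ℝ) (B : ℝ → Fin N → ℝ)
    (hE : ∀ t : ℝ, E t = Matrix.of fun i j => ∫ ζ in a..b, Φ (ζ, t) i * Φ (ζ, t) j)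
    (hF : ∀ t : ℝ, F t = -vecMulVec (Φ (a, t)) (Φ (a, t))
        - (Matrix.of fun i j => ∫ ζ in a..b, deriv (fun z => Φ (z, t) i) ζ * Φ (ζ, t) j)
        - (1 / 𝓗₀) • (Matrix.of fun i j =>
            ∫ ζ in a..b, Φ (ζ, t) i * deriv (fun s => Φ (ζ, s) j) t))
    (hB : ∀ t : ℝ, B t = Φ (b, t))
    (x_d e_d : ℝ → Fin N → ℝ) (u y : ℝ → ℝ)
    (hx_d : Differentiable ℝ x_d) (hu : Differentiable ℝ u)
    (he_d : ∀ t : ℝ, e_d t = 𝓗₀ • x_d t)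
    (hdyn : ∀ t : ℝ, E t *ᵥ deriv x_d t = F t *ᵥ e_d t + u t • B t)
    (huin : ∀ t : ℝ, u t = Φ (b, t) ⬝ᵥ e_d t)
    (hy : ∀ t : ℝ, y t = Φ (a, t) ⬝ᵥ e_d t) :
    ∀ t : ℝ, HasDerivAt (fun s => (1 / 2) * 𝓗₀ * (x_d s ⬝ᵥ (E s *ᵥ x_d s)))
      ((1 / 2) * ((u t) ^ 2 - (y t) ^ 2)) t := by
  intro t
  have hΦi : ∀ i, ContDiff ℝ 1 (fun p : ℝ × ℝ => Φ p i) := fun i => contDiff_pi.mp hΦ i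
  -- slice differentiability
  have hsl_s : ∀ (ζ : ℝ) (i : Fin N), Differentiable ℝ (fun s => Φ (ζ, s) i) := fun ζ i =>
    ((hΦi i).differentiable one_ne_zero).comp ((differentiable_const ζ).prodMk differentiable_id)
  have hsl_z : ∀ (i : Fin N), Differentiable ℝ (fun z => Φ (z, t) i) := fun i =>
    ((hΦi i).differentiable one_ne_zero).comp (differentiable_id.prodMk (differentiable_const t))
  -- shorthand
  set x : Fin N → ℝ := x_d t with hx
  set x' : Fin N → ℝ := deriv x_d t with hx'
  set P : ℝ → Fin N → ℝ := fun ζ => Φ (ζ, t) with hP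
  set ds : ℝ → Fin N → ℝ := fun ζ i => deriv (fun s => Φ (ζ, s) i) t with hds
  set dz : ℝ → Fin N → ℝ := fun ζ i => deriv (fun z => Φ (z, t) i) ζ with hdz
  -- continuity of slices
  have cP : ∀ i, Continuous (fun ζ => P ζ i) := fun i =>
    (hΦi i).continuous.comp (continuous_id.prodMk continuous_const)
  have cds : ∀ i, Continuous (fun ζ => ds ζ i) := by
    intro i
    have heq : (fun ζ => ds ζ i) = fun ζ => fderiv ℝ (fun p => Φ p i) (ζ, t) (0, 1) := by
      funext ζ
      have h1 : HasDerivAt (fun s : ℝ => ((ζ, s) : ℝ × ℝ)) (0, 1) t :=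
        (hasDerivAt_const t ζ).prodMk (hasDerivAt_id t)
      exact ((((hΦi i).differentiable one_ne_zero) (ζ, t)).hasFDerivAt.comp_hasDerivAt t h1).deriv
    rw [heq]
    exact ((((hΦi i).continuous_fderiv one_ne_zero).comp
      (continuous_id.prodMk continuous_const)).clm_apply continuous_const)
  have cdz : ∀ i, Continuous (fun ζ => dz ζ i) := by
    intro i
    have heq : (fun ζ => dz ζ i) = fun ζ => fderiv ℝ (fun p => Φ p i) (ζ, t) (1, 0) := by
      funext ζ
      have h1 : HasDerivAt (fun z : ℝ => ((z, t) : ℝ × ℝ)) (1, 0) ζ :=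
        (hasDerivAt_id ζ).prodMk (hasDerivAt_const ζ t)
      exact ((((hΦi i).differentiable one_ne_zero) (ζ, t)).hasFDerivAt.comp_hasDerivAt ζ h1).deriv
    rw [heq]
    exact ((((hΦi i).continuous_fderiv one_ne_zero).comp
      (continuous_id.prodMk continuous_const)).clm_apply continuous_const)
  -- componentwise derivative of x_d
  have hxc : ∀ i, HasDerivAt (fun s => x_d s i) (x' i) t :=
    hasDerivAt_pi.mp (hx_d t).hasDerivAt
  -- derivative of E entries
  have hEent : ∀ i j, HasDerivAt (fun s => ∫ ζ in a..b, Φ (ζ, s) i * Φ (ζ, s) j)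
      (∫ ζ in a..b, (ds ζ i * P ζ j + P ζ i * ds ζ j)) t := by
    intro i j
    have h := hasDerivAt_integral_param (fun p => Φ p i * Φ p j) ((hΦi i).mul (hΦi j)) a b t
    convert h using 1
    refine intervalIntegral.integral_congr fun ζ _ => ?_
    exact (((hsl_s ζ i t).hasDerivAt).mul ((hsl_s ζ j t).hasDerivAt)).deriv.symm
  -- abbreviations for the matrices' entries
  set Ee : Fin N → Fin N → ℝ := fun i j => ∫ ζ in a..b, P ζ i * P ζ j with hEe
  set Ee' : Fin N → Fin N → ℝ := fun i j => ∫ ζ in a..b, (ds ζ i * P ζ j + P ζ i * ds ζ j)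
    with hEe'
  -- the function rewritten as a double sum
  have hfun : (fun s => (1 / 2) * 𝓗₀ * (x_d s ⬝ᵥ (E s *ᵥ x_d s)))
      = fun s => ∑ i, ∑ j, (1 / 2) * 𝓗₀ *
          (x_d s i * ((∫ ζ in a..b, Φ (ζ, s) i * Φ (ζ, s) j) * x_d s j)) := by
    funext s
    rw [hE s]
    simp only [dotProduct, Matrix.mulVec, Matrix.of_apply, Finset.mul_sum]
  -- total derivative of the double sum
  have hD : HasDerivAt (fun s => ∑ i, ∑ j, (1 / 2) * 𝓗₀ *
        (x_d s i * ((∫ ζ in a..b, Φ (ζ, s) i * Φ (ζ, s) j) * x_d s j)))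
      (∑ i, ∑ j, (1 / 2) * 𝓗₀ *
        (x' i * (Ee i j * x j) + x i * (Ee' i j * x j + Ee i j * x' j))) t := by
    refine HasDerivAt.fun_sum fun i _ => HasDerivAt.fun_sum fun j _ => ?_
    exact (((hxc i).mul ((hEent i j).mul (hxc j)))).const_mul ((1 / 2) * 𝓗₀)
  rw [hfun]
  -- It remains to identify the derivative value
  have hval : (∑ i, ∑ j, (1 / 2) * 𝓗₀ *
        (x' i * (Ee i j * x j) + x i * (Ee' i j * x j + Ee i j * x' j)))
      = (1 / 2) * ((u t) ^ 2 - (y t) ^ 2) := by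

    have Esym : ∀ i j, Ee i j = Ee j i := fun i j =>
      intervalIntegral.integral_congr fun ζ _ => mul_comm _ _
    have int_dzP : ∀ (i j : Fin N), IntervalIntegrable (fun ζ => dz ζ i * P ζ j) volume a b :=
      fun i j => ((cdz i).mul (cP j)).intervalIntegrable a b
    have int_Pds : ∀ (i j : Fin N), IntervalIntegrable (fun ζ => P ζ i * ds ζ j) volume a b :=
      fun i j => ((cP i).mul (cds j)).intervalIntegrable a b
    have int_dsP : ∀ (i j : Fin N), IntervalIntegrable (fun ζ => ds ζ i * P ζ j) volume a b :=
      fun i j => ((cds i).mul (cP j)).intervalIntegrable a b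
    set A := ∑ i, P a i * x i with hA
    set Bb := ∑ i, P b i * x i with hBb
    set T1 := ∑ i, ∑ j, x i * ((∫ ζ in a..b, dz ζ i * P ζ j) * x j) with hT1
    set T2 := ∑ i, ∑ j, x i * ((∫ ζ in a..b, P ζ i * ds ζ j) * x j) with hT2
    -- u and y in terms of A, Bb
    have hu' : u t = 𝓗₀ * Bb := by
      rw [huin t, he_d t, hBb]
      simp only [dotProduct, Pi.smul_apply, smul_eq_mul, Finset.mul_sum]
      exact Finset.sum_congr rfl fun i _ => by simp only [hP]; ring
    have hy' : y t = 𝓗₀ * A := by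
      rw [hy t, he_d t, hA]
      simp only [dotProduct, Pi.smul_apply, smul_eq_mul, Finset.mul_sum]
      exact Finset.sum_congr rfl fun i _ => by simp only [hP]; ring
    -- Ee' splits into two integrals
    have hEe'split : ∀ i j, Ee' i j = (∫ ζ in a..b, ds ζ i * P ζ j)
        + (∫ ζ in a..b, P ζ i * ds ζ j) := fun i j =>
      intervalIntegral.integral_add (int_dsP i j) (int_Pds i j)
    -- symmetry trick for T2
    have hT2sym : ∑ i, ∑ j, x i * ((∫ ζ in a..b, ds ζ i * P ζ j) * x j) = T2 := by
      rw [hT2, Finset.sum_comm]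
      refine Finset.sum_congr rfl fun j _ => Finset.sum_congr rfl fun i _ => ?_
      rw [intervalIntegral.integral_congr (fun ζ _ => mul_comm (ds ζ i) (P ζ j))]
      ring
    -- the dynamics, paired with x
    have hSC : ∑ i, ∑ j, x i * (Ee i j * x' j)
        = -(𝓗₀ * (A * A)) - 𝓗₀ * T1 - T2 + u t * Bb := by
      have hkey : x ⬝ᵥ (E t *ᵥ x') = x ⬝ᵥ (F t *ᵥ e_d t) + u t * (x ⬝ᵥ B t) := by
        rw [hdyn t, dotProduct_add]
        congr 1
        simp only [dotProduct, Pi.smul_apply, smul_eq_mul, Finset.mul_sum]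
        exact Finset.sum_congr rfl fun i _ => by ring
      have p1 : x ⬝ᵥ (E t *ᵥ x') = ∑ i, ∑ j, x i * (Ee i j * x' j) := by
        rw [hE t]
        simp only [dotProduct, Matrix.mulVec, Matrix.of_apply, Finset.mul_sum]
        rfl
      have p3 : x ⬝ᵥ B t = Bb := by
        rw [hB t, hBb]
        exact Finset.sum_congr rfl fun i _ => by simp only [hP]; ring
      have p2 : x ⬝ᵥ (F t *ᵥ e_d t) = -(𝓗₀ * (A * A)) - 𝓗₀ * T1 - T2 := by
        rw [hF t, he_d t]
        rw [Matrix.sub_mulVec, Matrix.sub_mulVec, Matrix.neg_mulVec, Matrix.smul_mulVec]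
        rw [dotProduct_sub, dotProduct_sub, dotProduct_neg, dotProduct_smul, smul_eq_mul]
        have q1 : x ⬝ᵥ (vecMulVec (Φ (a, t)) (Φ (a, t)) *ᵥ (𝓗₀ • x)) = 𝓗₀ * (A * A) := by
          have e1 : 𝓗₀ * (A * A)
              = ∑ i, ∑ j, x i * (Φ (a, t) i * Φ (a, t) j * (𝓗₀ * x j)) := by
            rw [hA, Finset.sum_mul_sum, Finset.mul_sum]
            refine Finset.sum_congr rfl fun i _ => ?_
            rw [Finset.mul_sum]
            refine Finset.sum_congr rfl fun j _ => by simp only [hP]; ring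
          rw [e1]
          simp only [dotProduct, Matrix.mulVec, vecMulVec_apply, Pi.smul_apply, smul_eq_mul,
            Finset.mul_sum]
        have q2 : x ⬝ᵥ ((Matrix.of fun i j =>
              ∫ ζ in a..b, deriv (fun z => Φ (z, t) i) ζ * Φ (ζ, t) j) *ᵥ (𝓗₀ • x))
            = 𝓗₀ * T1 := by
          have e2 : 𝓗₀ * T1 = ∑ i, ∑ j, x i *
              ((∫ ζ in a..b, deriv (fun z => Φ (z, t) i) ζ * Φ (ζ, t) j) * (𝓗₀ * x j)) := by
            rw [hT1, Finset.mul_sum]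
            refine Finset.sum_congr rfl fun i _ => ?_
            rw [Finset.mul_sum]
            refine Finset.sum_congr rfl fun j _ => by simp only [hP, hdz]; ring
          rw [e2]
          simp only [dotProduct, Matrix.mulVec, Matrix.of_apply, Pi.smul_apply, smul_eq_mul,
            Finset.mul_sum]
        have q3 : (1 / 𝓗₀) * (x ⬝ᵥ ((Matrix.of fun i j =>
              ∫ ζ in a..b, Φ (ζ, t) i * deriv (fun s => Φ (ζ, s) j) t) *ᵥ (𝓗₀ • x)))
            = T2 := by
          have e3 : x ⬝ᵥ ((Matrix.of fun i j =>
                ∫ ζ in a..b, Φ (ζ, t) i * deriv (fun s => Φ (ζ, s) j) t) *ᵥ (𝓗₀ • x))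
              = 𝓗₀ * T2 := by
            have e3' : 𝓗₀ * T2 = ∑ i, ∑ j, x i *
                ((∫ ζ in a..b, Φ (ζ, t) i * deriv (fun s => Φ (ζ, s) j) t) * (𝓗₀ * x j)) := by
              rw [hT2, Finset.mul_sum]
              refine Finset.sum_congr rfl fun i _ => ?_
              rw [Finset.mul_sum]
              refine Finset.sum_congr rfl fun j _ => by simp only [hP, hds]; ring
            rw [e3']
            simp only [dotProduct, Matrix.mulVec, Matrix.of_apply, Pi.smul_apply, smul_eq_mul,
              Finset.mul_sum]
          rw [e3]
          field_simp
        rw [q1, q2, q3]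
      rw [p1] at hkey
      rw [hkey, p2, p3]
    -- symmetry for the first summand
    have hSA : ∑ i, ∑ j, x' i * (Ee i j * x j) = ∑ i, ∑ j, x i * (Ee i j * x' j) := by
      rw [Finset.sum_comm]
      refine Finset.sum_congr rfl fun j _ => Finset.sum_congr rfl fun i _ => ?_
      rw [Esym j i]
      ring
    -- the E' part gives 2 * T2
    have hSB : ∑ i, ∑ j, x i * (Ee' i j * x j) = 2 * T2 := by
      have : ∀ (i j : Fin N), x i * (Ee' i j * x j)
          = x i * ((∫ ζ in a..b, ds ζ i * P ζ j) * x j)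
            + x i * ((∫ ζ in a..b, P ζ i * ds ζ j) * x j) := by
        intro i j; rw [hEe'split i j]; ring
      simp only [this, Finset.sum_add_distrib]
      rw [hT2sym]
      ring
    -- FTC identity for T1
    have hT1val : T1 = (1 / 2) * (Bb * Bb - A * A) := by
      have hswap := sum_sum_integral_eq a b x x dz P cdz cP
      set f : ℝ → ℝ := fun ζ => ∑ i, P ζ i * x i with hf
      have hder : ∀ ζ, HasDerivAt f (∑ i, dz ζ i * x i) ζ := by
        intro ζ
        exact HasDerivAt.fun_sum fun i _ => ((hsl_z i ζ).hasDerivAt.mul_const (x i))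
      have hder2 : ∀ ζ ∈ Set.uIcc a b, HasDerivAt (fun z => f z * f z)
          ((∑ i, dz ζ i * x i) * f ζ + f ζ * (∑ i, dz ζ i * x i)) ζ :=
        fun ζ _ => (hder ζ).mul (hder ζ)
      have hcf : Continuous f := continuous_finset_sum _ fun i _ => (cP i).mul continuous_const
      have hcf' : Continuous (fun ζ => ∑ i, dz ζ i * x i) :=
        continuous_finset_sum _ fun i _ => (cdz i).mul continuous_const
      have hint : IntervalIntegrable
          (fun ζ => (∑ i, dz ζ i * x i) * f ζ + f ζ * (∑ i, dz ζ i * x i)) volume a b :=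
        ((hcf'.mul hcf).add (hcf.mul hcf')).intervalIntegrable a b
      have hFTC := intervalIntegral.integral_eq_sub_of_hasDerivAt hder2 hint
      have h2 : (∫ ζ in a..b, ((∑ i, dz ζ i * x i) * f ζ + f ζ * (∑ i, dz ζ i * x i)))
          = 2 * ∫ ζ in a..b, (∑ i, dz ζ i * x i) * f ζ := by
        rw [← intervalIntegral.integral_const_mul]
        exact intervalIntegral.integral_congr fun ζ _ => by ring
      rw [h2] at hFTC
      rw [hT1, hswap, hA, hBb]
      have hfa : f a = ∑ i, P a i * x i := rfl
      have hfb : f b = ∑ i, P b i * x i := rfl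
      rw [← hfa, ← hfb]
      have : (∫ ζ in a..b, (∑ i, dz ζ i * x i) * f ζ)
          = (f b * f b - f a * f a) / 2 := by linarith
      rw [show (∫ ζ in a..b, (∑ i, dz ζ i * x i) * (∑ j, P ζ j * x j))
          = ∫ ζ in a..b, (∑ i, dz ζ i * x i) * f ζ from rfl, this]
      ring
    -- put everything together
    have hexp : ∀ (i j : Fin N), (1 / 2) * 𝓗₀ *
          (x' i * (Ee i j * x j) + x i * (Ee' i j * x j + Ee i j * x' j))
        = (1 / 2) * 𝓗₀ * (x' i * (Ee i j * x j)) + ((1 / 2) * 𝓗₀ * (x i * (Ee' i j * x j))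
            + (1 / 2) * 𝓗₀ * (x i * (Ee i j * x' j))) := by
      intro i j; ring
    simp only [hexp, Finset.sum_add_distrib]
    have r1 : ∑ i, ∑ j, (1 / 2) * 𝓗₀ * (x' i * (Ee i j * x j))
        = (1 / 2) * 𝓗₀ * ∑ i, ∑ j, x' i * (Ee i j * x j) := by
      simp only [Finset.mul_sum]
    have r2 : ∑ i, ∑ j, (1 / 2) * 𝓗₀ * (x i * (Ee' i j * x j))
        = (1 / 2) * 𝓗₀ * ∑ i, ∑ j, x i * (Ee' i j * x j) := by
      simp only [Finset.mul_sum]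
    have r3 : ∑ i, ∑ j, (1 / 2) * 𝓗₀ * (x i * (Ee i j * x' j))
        = (1 / 2) * 𝓗₀ * ∑ i, ∑ j, x i * (Ee i j * x' j) := by
      simp only [Finset.mul_sum]
    rw [r1, r2, r3, hSA, hSB, hSC, hT1val, hu', hy']
    ring
  rw [← hval]
  exact hD
end
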